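/- Let S be a hyponormal unilateral weighted shift on H with nonzero weight sequence (α_n)_{n≥1} and M = lim_{n→∞} |α_n|. Then the residual spectrum of S is exactly the open disk {λ ∈ ℂ : |λ| < M}; that is, λI − S is injective with non-dense range if and only if |λ| < M. -/

import Mathlib

open Filter
open scoped ComplexConjugate ENNReal

local notation "⟪" x ", " y "⟫" => @inner ℂ _ _ x y

section Aux
variable {H : Type*} [NormedAddCommGroup H] [InnerProductSpace ℂ H] [CompleteSpace H]

lemma hb_dense_span' (e : HilbertBasis ℕ ℂ H) :
    Dense ((Submodule.span ℂ (Set.range (⇑e)) : Submodule ℂ H) : Set H) :=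
  Submodule.dense_iff_topologicalClosure_eq_top.mpr e.dense_span

lemma eq_zero_of_inner_basis (e : HilbertBasis ℕ ℂ H) {x : H}
    (h : ∀ n, ⟪e n, x⟫ = 0) : x = 0 := by
  apply e.repr.injective
  rw [map_zero]
  ext n
  simp [e.repr_apply_apply, h n]

lemma inner_basis_S (e : HilbertBasis ℕ ℂ H) (α : ℕ → ℂ) (S : H →L[ℂ] H)
    (hS : ∀ n : ℕ, S (e n) = α n • e (n + 1)) (m : ℕ) (x : H) :
    ⟪e (m+1), S x⟫ = α m * ⟪e m, x⟫ := by
  have key : (innerSL ℂ (e (m+1))).comp S = α m • innerSL ℂ (e m) := by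
    apply ContinuousLinearMap.ext_on (hb_dense_span' e)
    rintro _ ⟨n, rfl⟩
    have horth := orthonormal_iff_ite.mp e.orthonormal
    simp only [ContinuousLinearMap.comp_apply, ContinuousLinearMap.smul_apply, innerSL_apply_apply,
      hS n, inner_smul_right, horth]
    rcases eq_or_ne m n with rfl | h
    · simp
    · simp [h]
  simpa using DFunLike.congr_fun key x

end Aux

section Aux2
variable {H : Type*} [NormedAddCommGroup H] [InnerProductSpace ℂ H] [CompleteSpace H]

set_option linter.unusedSectionVars false

lemma inner_basis_zero_S (e : HilbertBasis ℕ ℂ H) (α : ℕ → ℂ) (S : H →L[ℂ] H)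
    (hS : ∀ n : ℕ, S (e n) = α n • e (n + 1)) (x : H) :
    ⟪e 0, S x⟫ = 0 := by
  have key : (innerSL ℂ (e 0)).comp S = 0 := by
    apply ContinuousLinearMap.ext_on (hb_dense_span' e)
    rintro _ ⟨n, rfl⟩
    have horth := orthonormal_iff_ite.mp e.orthonormal
    simp [hS n, inner_smul_right, horth]
  simpa using DFunLike.congr_fun key x

lemma not_denseRange_of_orth (e : HilbertBasis ℕ ℂ H) (T : H →L[ℂ] H) (y : H) (hy : y ≠ 0)
    (h : ∀ n, ⟪y, T (e n)⟫ = 0) : ¬ DenseRange ⇑T := by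
  intro hd
  have hF : (innerSL ℂ y).comp T = 0 := by
    apply ContinuousLinearMap.ext_on (hb_dense_span' e)
    rintro _ ⟨n, rfl⟩
    simpa using h n
  have hG : (innerSL ℂ y) = (0 : H →L[ℂ] ℂ) := by
    apply ContinuousLinearMap.ext_on (hd.mono Submodule.subset_span)
    rintro _ ⟨w, rfl⟩
    simpa using DFunLike.congr_fun hF w
  have := DFunLike.congr_fun hG y
  simp only [innerSL_apply_apply, ContinuousLinearMap.zero_apply] at this
  exact hy (inner_self_eq_zero.mp this)

end Aux2

section Aux3
variable {H : Type*} [NormedAddCommGroup H] [InnerProductSpace ℂ H] [CompleteSpace H]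

set_option linter.unusedSectionVars false

lemma shift_inj (e : HilbertBasis ℕ ℂ H) (α : ℕ → ℂ) (S : H →L[ℂ] H)
    (hS : ∀ n : ℕ, S (e n) = α n • e (n + 1)) (hnz : ∀ n, α n ≠ 0) (lam : ℂ) :
    Function.Injective ⇑(lam • (1 : H →L[ℂ] H) - S) := by
  intro a b hab
  rw [← sub_eq_zero]
  have h0 : (lam • (1 : H →L[ℂ] H) - S) (a - b) = 0 := by rw [map_sub, hab, sub_self]
  set x := a - b with hx
  have hSx : S x = lam • x := by
    simp only [ContinuousLinearMap.sub_apply, ContinuousLinearMap.smul_apply,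
      ContinuousLinearMap.one_apply, sub_eq_zero] at h0
    exact h0.symm
  have h0' : lam * ⟪e 0, x⟫ = 0 := by
    rw [← inner_smul_right, ← hSx, inner_basis_zero_S e α S hS]
  have hsucc : ∀ n, lam * ⟪e (n+1), x⟫ = α n * ⟪e n, x⟫ := by
    intro n
    rw [← inner_smul_right, ← hSx, inner_basis_S e α S hS]
  have hc : ∀ n, ⟪e n, x⟫ = 0 := by
    rcases eq_or_ne lam 0 with rfl | hl
    · intro n
      have := hsucc n
      rw [zero_mul] at this
      exact ((mul_eq_zero.mp this.symm).resolve_left (hnz n))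
    · intro n
      induction n with
      | zero => exact (mul_eq_zero.mp h0').resolve_left hl
      | succ n ih =>
          have := hsucc n
          rw [ih, mul_zero] at this
          exact (mul_eq_zero.mp this).resolve_left hl
  exact eq_zero_of_inner_basis e hc

end Aux3

section Aux4
variable {H : Type*} [NormedAddCommGroup H] [InnerProductSpace ℂ H] [CompleteSpace H]

set_option linter.unusedSectionVars false

lemma norm_lt_of_not_dense (e : HilbertBasis ℕ ℂ H) (α : ℕ → ℂ) (S : H →L[ℂ] H)
    (hS : ∀ n : ℕ, S (e n) = α n • e (n + 1))
    (hmono : ∀ n : ℕ, ‖α n‖ ≤ ‖α (n + 1)‖) (hnz : ∀ n, α n ≠ 0)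
    (M : ℝ) (hM : Filter.Tendsto (fun n : ℕ => ‖α n‖) Filter.atTop (nhds M))
    (lam : ℂ) (hnd : ¬ DenseRange ⇑(lam • (1 : H →L[ℂ] H) - S)) : ‖lam‖ < M := by
  set T : H →L[ℂ] H := lam • (1 : H →L[ℂ] H) - S with hT
  have hαM : ∀ n, ‖α n‖ ≤ M := Monotone.ge_of_tendsto (monotone_nat_of_le_succ hmono) hM
  have hM0 : 0 < M := lt_of_lt_of_le (norm_pos_iff.mpr (hnz 0)) (hαM 0)
  by_contra hge
  push_neg at hge
  have hlam0 : lam ≠ 0 := by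
    intro h; rw [h, norm_zero] at hge; exact absurd hge (not_le.mpr hM0)
  -- extract a nonzero orthogonal vector
  have hK : (LinearMap.range (T : H →ₗ[ℂ] H))ᗮ ≠ ⊥ := by
    intro h
    apply hnd
    have htop : (LinearMap.range (T : H →ₗ[ℂ] H)).topologicalClosure = ⊤ :=
      Submodule.topologicalClosure_eq_top_iff.mpr h
    have hd : Dense ((LinearMap.range (T : H →ₗ[ℂ] H) : Submodule ℂ H) : Set H) :=
      Submodule.dense_iff_topologicalClosure_eq_top.mpr htop
    simpa [DenseRange, LinearMap.coe_range] using hd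
  obtain ⟨y, hy_mem, hy0⟩ := Submodule.ne_bot_iff _ |>.mp hK
  have horth : ∀ x : H, ⟪T x, y⟫ = 0 := fun x =>
    (Submodule.mem_orthogonal _ y).mp hy_mem (T x) ⟨x, rfl⟩
  set d : ℕ → ℂ := fun n => ⟪e n, y⟫ with hd
  have hrec : ∀ n, conj (α n) * d (n+1) = conj lam * d n := by
    intro n
    have h := horth (e n)
    have hTe : T (e n) = lam • e n - α n • e (n+1) := by
      simp [hT, hS n]
    rw [hTe, inner_sub_left, inner_smul_left, inner_smul_left, sub_eq_zero] at h
    exact h.symm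
  have hnormrec : ∀ n, ‖α n‖ * ‖d (n+1)‖ = ‖lam‖ * ‖d n‖ := by
    intro n
    have := congrArg norm (hrec n)
    simpa [norm_mul] using this
  have hdmono : ∀ n, ‖d n‖ ≤ ‖d (n+1)‖ := by
    intro n
    have hα : 0 < ‖α n‖ := norm_pos_iff.mpr (hnz n)
    have h1 : ‖α n‖ * ‖d n‖ ≤ ‖lam‖ * ‖d n‖ :=
      mul_le_mul_of_nonneg_right ((hαM n).trans hge) (norm_nonneg _)
    have h2 : ‖α n‖ * ‖d n‖ ≤ ‖α n‖ * ‖d (n+1)‖ := by rw [hnormrec n]; exact h1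
    exact le_of_mul_le_mul_left h2 hα
  have hd0 : d 0 ≠ 0 := by
    intro h0
    apply hy0
    apply eq_zero_of_inner_basis e
    intro n
    induction n with
    | zero => exact h0
    | succ n ih =>
        have hr := hrec n
        have hdn : d n = 0 := ih
        rw [hdn, mul_zero] at hr
        have : d (n+1) = 0 :=
          (mul_eq_zero.mp hr).resolve_left (fun hh => hnz n (by simpa using hh))
        exact this
  have hlow : ∀ n, ‖d 0‖ ≤ ‖d n‖ := by
    intro n
    induction n with
    | zero => exact le_refl _
    | succ n ih => exact ih.trans (hdmono n)
  have hsum : Summable (fun n => ‖e.repr y n‖ ^ (2 : ℝ≥0∞).toReal) :=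
    (lp.memℓp (e.repr y)).summable (by norm_num)
  have htend := hsum.tendsto_atTop_zero
  have hb : ∀ n, ‖d 0‖ ^ (2 : ℝ≥0∞).toReal ≤ ‖e.repr y n‖ ^ (2 : ℝ≥0∞).toReal := by
    intro n
    rw [e.repr_apply_apply]
    exact Real.rpow_le_rpow (norm_nonneg _) (hlow n) (by norm_num)
  have hle := ge_of_tendsto htend (Filter.Eventually.of_forall hb)
  have hpos : 0 < ‖d 0‖ ^ (2 : ℝ≥0∞).toReal :=
    Real.rpow_pos_of_pos (norm_pos_iff.mpr hd0) _
  linarith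

end Aux4

section Aux5
variable {H : Type*} [NormedAddCommGroup H] [InnerProductSpace ℂ H] [CompleteSpace H]

set_option linter.unusedSectionVars false

lemma not_dense_of_norm_lt (e : HilbertBasis ℕ ℂ H) (α : ℕ → ℂ) (S : H →L[ℂ] H)
    (hS : ∀ n : ℕ, S (e n) = α n • e (n + 1))
    (hmono : ∀ n : ℕ, ‖α n‖ ≤ ‖α (n + 1)‖) (hnz : ∀ n, α n ≠ 0)
    (M : ℝ) (hM : Filter.Tendsto (fun n : ℕ => ‖α n‖) Filter.atTop (nhds M))
    (lam : ℂ) (hlam : ‖lam‖ < M) :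
    ¬ DenseRange ⇑(lam • (1 : H →L[ℂ] H) - S) := by
  set T : H →L[ℂ] H := lam • (1 : H →L[ℂ] H) - S with hT
  have hαM : ∀ n, ‖α n‖ ≤ M := Monotone.ge_of_tendsto (monotone_nat_of_le_succ hmono) hM
  have hM0 : 0 < M := lt_of_lt_of_le (norm_pos_iff.mpr (hnz 0)) (hαM 0)
  set d : ℕ → ℂ := fun n =>
    Nat.rec (motive := fun _ => ℂ) 1 (fun k dk => conj lam * dk / conj (α k)) n with hdd
  have hd0 : d 0 = 1 := rfl
  have hdsucc : ∀ n, d (n+1) = conj lam * d n / conj (α n) := fun n => rfl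
  have hconjα : ∀ n, conj (α n) ≠ 0 := fun n hh => hnz n (by simpa using hh)
  have hkey : ∀ n, conj (α n) * d (n+1) = conj lam * d n := by
    intro n
    rw [hdsucc n, mul_comm, div_mul_cancel₀ _ (hconjα n)]
  have hnd : ∀ n, ‖d (n+1)‖ = ‖lam‖ * ‖d n‖ / ‖α n‖ := by
    intro n
    simp [hdsucc n, norm_div, norm_mul]
  have hsum2 : Summable (fun n => ‖d n‖ ^ (2:ℕ)) := by
    rcases eq_or_ne lam 0 with rfl | hl0
    · apply summable_of_ne_finset_zero (s := {0})
      intro n hn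
      rcases Nat.exists_eq_succ_of_ne_zero (by simpa using hn) with ⟨m, rfl⟩
      have : d (m+1) = 0 := by rw [hdsucc m]; simp
      simp [this]
    · have hdnz : ∀ n, d n ≠ 0 := by
        intro n
        induction n with
        | zero => rw [hd0]; exact one_ne_zero
        | succ n ih =>
            rw [hdsucc n]
            exact div_ne_zero (mul_ne_zero (fun hh => hl0 (by simpa using hh)) ih) (hconjα n)
      apply summable_of_ratio_test_tendsto_lt_one (l := (‖lam‖ / M)^2)
      · exact pow_lt_one₀ (div_nonneg (norm_nonneg _) hM0.le) ((div_lt_one hM0).mpr hlam)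
          two_ne_zero
      · exact Filter.Eventually.of_forall fun n => pow_ne_zero _ (norm_ne_zero_iff.mpr (hdnz n))
      · have heq : ∀ n, ‖‖d (n+1)‖ ^ (2:ℕ)‖ / ‖‖d n‖ ^ (2:ℕ)‖ = (‖lam‖ / ‖α n‖)^2 := by
          intro n
          have hb : (‖d n‖:ℝ) ≠ 0 := norm_ne_zero_iff.mpr (hdnz n)
          rw [Real.norm_of_nonneg (by positivity), Real.norm_of_nonneg (by positivity), hnd n,
            show ‖lam‖ * ‖d n‖ / ‖α n‖ = ‖lam‖ / ‖α n‖ * ‖d n‖ by ring, mul_pow,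
            mul_div_assoc, div_self (pow_ne_zero 2 hb), mul_one]
        simp only [heq]
        exact (tendsto_const_nhds.div hM hM0.ne').pow 2
  have hsum : Summable (fun n => ‖d n‖ ^ (2:ℝ≥0∞).toReal) := by
    have h2 : ∀ n, ‖d n‖ ^ (2:ℝ≥0∞).toReal = ‖d n‖ ^ (2:ℕ) := by
      intro n
      rw [show (2:ℝ≥0∞).toReal = ((2:ℕ):ℝ) by norm_num, Real.rpow_natCast]
    simpa only [h2] using hsum2
  have hmem : Memℓp d 2 := memℓp_gen hsum
  set y : H := e.repr.symm ⟨d, hmem⟩ with hy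
  have hyrep : ∀ n, ⟪e n, y⟫ = d n := by
    intro n
    rw [← e.repr_apply_apply, hy, LinearIsometryEquiv.apply_symm_apply]
  have hy0 : y ≠ 0 := by
    intro h
    have h1 := hyrep 0
    rw [h, inner_zero_right, hd0] at h1
    exact one_ne_zero h1.symm
  apply not_denseRange_of_orth e T y hy0
  intro n
  have hTe : T (e n) = lam • e n - α n • e (n+1) := by simp [hT, hS n]
  rw [hTe, inner_sub_right, inner_smul_right, inner_smul_right]
  have h1 : ⟪y, e n⟫ = conj (d n) := by
    rw [← hyrep n]
    exact (inner_conj_symm y (e n)).symm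
  have h2 : ⟪y, e (n+1)⟫ = conj (d (n+1)) := by
    rw [← hyrep (n+1)]
    exact (inner_conj_symm y (e (n+1))).symm
  rw [h1, h2, sub_eq_zero]
  have h3 := congrArg conj (hkey n)
  simp only [map_mul, Complex.conj_conj] at h3
  exact h3.symm

end Aux5

/-- The residual spectrum of a hyponormal unilateral weighted shift with nonzero
weights is exactly the open disk of radius `M = lim ‖α n‖`: `λI - S` is injective
with non-dense range iff `‖λ‖ < M`. -/
theorem residualSpectrum_of_hyponormal_unilateral_weighted_shift
    {H : Type*} [NormedAddCommGroup H] [InnerProductSpace ℂ H] [CompleteSpace H]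
    (e : HilbertBasis ℕ ℂ H) (α : ℕ → ℂ) (S : H →L[ℂ] H)
    (hS : ∀ n : ℕ, S (e n) = α n • e (n + 1))
    (hmono : ∀ n : ℕ, ‖α n‖ ≤ ‖α (n + 1)‖)
    (hnz : ∀ n : ℕ, α n ≠ 0)
    (M : ℝ) (hM : Filter.Tendsto (fun n : ℕ => ‖α n‖) Filter.atTop (nhds M)) :
    {lam : ℂ | Function.Injective ⇑(lam • (1 : H →L[ℂ] H) - S) ∧
        ¬ DenseRange ⇑(lam • (1 : H →L[ℂ] H) - S)}
      = {lam : ℂ | ‖lam‖ < M} := by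
  ext lam
  simp only [Set.mem_setOf_eq]
  constructor
  · rintro ⟨-, hnd⟩
    exact norm_lt_of_not_dense e α S hS hmono hnz M hM lam hnd
  · intro hlam
    exact ⟨shift_inj e α S hS hnz lam,
      not_dense_of_norm_lt e α S hS hmono hnz M hM lam hlam⟩
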